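/- (Unique minimization by the quantile) Let τ ∈ (0,1) and let Y be a real-valued random variable and q ∈ ℝ. Set F(s) := P(Y ≤ q + s) and suppose F(0) = τ and that there exist c₀ > 0 and r₀ > 0 such that F(t) − F(s) ≥ c₀(t − s) for all −r₀ ≤ s ≤ t ≤ r₀. Then q is the unique minimizer of θ ↦ E[ρ_τ(Y − θ) − ρ_τ(Y − q)]: for every θ ≠ q, E[ρ_τ(Y − θ) − ρ_τ(Y − q)] > 0. -/

import Mathlib

open MeasureTheory

/-- The pinball (check) loss `ρ_τ(u) = u (τ - 1{u < 0})`. -/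
noncomputable def pinball (τ u : ℝ) : ℝ := u * (τ - if u < 0 then 1 else 0)


lemma pinball_eq (τ u : ℝ) : pinball τ u = τ * u + max (-u) 0 := by
  unfold pinball
  split_ifs with h
  · rw [max_eq_left (by linarith)]; ring
  · rw [max_eq_right (by linarith)]; ring

lemma fubini_key {Ω : Type*} [MeasurableSpace Ω] (μ : Measure Ω) [IsProbabilityMeasure μ]
    (Y : Ω → ℝ) (hY : Measurable Y) (q a b : ℝ) :
    ∫ ω, (volume (Set.Ici (Y ω - q) ∩ Set.Icc a b)).toReal ∂μ
      = ∫ s in Set.Icc a b, (μ {ω | Y ω ≤ q + s}).toReal := by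
  set ν := volume.restrict (Set.Icc a b) with hν
  haveI : IsFiniteMeasure ν := by
    constructor
    rw [hν, Measure.restrict_apply_univ, Real.volume_Icc]
    exact ENNReal.ofReal_lt_top
  set S : Set (Ω × ℝ) := {p | Y p.1 - q ≤ p.2} with hSdef
  have hS : MeasurableSet S := by
    have : S = (fun p : Ω × ℝ => Y p.1 - p.2) ⁻¹' Set.Iic q := by
      ext p; simp only [hSdef, Set.mem_setOf_eq, Set.mem_preimage, Set.mem_Iic]
      constructor <;> intro <;> linarith
    rw [this]
    exact ((hY.comp measurable_fst).sub measurable_snd) measurableSet_Iic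
  set f : Ω → ℝ → ℝ := fun ω s => S.indicator (fun _ => (1:ℝ)) (ω, s) with hfdef
  have hint : Integrable (Function.uncurry f) (μ.prod ν) :=
    (integrable_const (1:ℝ)).indicator hS
  have swap := MeasureTheory.integral_integral_swap hint
  have h1 : ∀ ω, ∫ s, f ω s ∂ν = (volume (Set.Ici (Y ω - q) ∩ Set.Icc a b)).toReal := by
    intro ω
    have he : ∀ s, f ω s = (Set.Ici (Y ω - q)).indicator (fun _ => (1:ℝ)) s := by
      intro s
      simp [hfdef, hSdef, Set.indicator_apply, Set.mem_Ici]
    simp_rw [he]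
    rw [MeasureTheory.integral_indicator measurableSet_Ici, hν,
      Measure.restrict_restrict measurableSet_Ici]
    simp
    rfl
  have h2 : ∀ s, ∫ ω, f ω s ∂μ = (μ {ω | Y ω ≤ q + s}).toReal := by
    intro s
    have he : ∀ ω, f ω s = ({ω | Y ω ≤ q + s}).indicator (fun _ => (1:ℝ)) ω := by
      intro ω
      simp only [hfdef, hSdef, Set.indicator_apply, Set.mem_setOf_eq]
      congr 1
      simp only [eq_iff_iff]
      constructor <;> intro <;> linarith
    have hms : MeasurableSet {ω | Y ω ≤ q + s} := measurableSet_le hY measurable_const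
    simp_rw [he]
    rw [MeasureTheory.integral_indicator hms]
    simp
    rfl
  calc ∫ ω, (volume (Set.Ici (Y ω - q) ∩ Set.Icc a b)).toReal ∂μ
      = ∫ ω, ∫ s, f ω s ∂ν ∂μ := by simp_rw [h1]
    _ = ∫ s, ∫ ω, f ω s ∂μ ∂ν := swap
    _ = ∫ s in Set.Icc a b, (μ {ω | Y ω ≤ q + s}).toReal := by rw [hν]; exact integral_congr_ae (Filter.Eventually.of_forall h2)

/-- Unique minimization by the quantile: if `F(s) = P(Y ≤ q + s)` satisfies `F(0) = τ` and
grows at rate at least `c₀` on `[−r₀, r₀]`, then `q` uniquely minimizes the pinball risk: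
`E[ρ_τ(Y − θ) − ρ_τ(Y − q)] > 0` for every `θ ≠ q`. -/
theorem quantile_unique_minimizer
    {Ω : Type*} [MeasurableSpace Ω] (μ : Measure Ω) [IsProbabilityMeasure μ]
    (τ : ℝ) (hτ : τ ∈ Set.Ioo (0:ℝ) 1)
    (Y : Ω → ℝ) (hY : Measurable Y) (q : ℝ)
    (c₀ r₀ : ℝ) (hc₀ : 0 < c₀) (hr₀ : 0 < r₀)
    (hF0 : (μ {ω | Y ω ≤ q + 0}).toReal = τ)
    (hgrow : ∀ s t : ℝ, -r₀ ≤ s → s ≤ t → t ≤ r₀ →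
      c₀ * (t - s) ≤ (μ {ω | Y ω ≤ q + t}).toReal - (μ {ω | Y ω ≤ q + s}).toReal) :
    ∀ θ : ℝ, θ ≠ q →
      0 < ∫ ω, (pinball τ (Y ω - θ) - pinball τ (Y ω - q)) ∂μ := by
  obtain ⟨hτ0, hτ1⟩ := hτ
  intro θ hθ
  have hFmono : Monotone (fun s => (μ {ω | Y ω ≤ q + s}).toReal) := by
    intro s t hst
    refine ENNReal.toReal_mono (measure_ne_top _ _) (measure_mono ?_)
    intro ω h
    simp only [Set.mem_setOf_eq] at *
    linarith
  set F : ℝ → ℝ := fun s => (μ {ω | Y ω ≤ q + s}).toReal with hFdef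
  have hF0' : F 0 = τ := hF0
  have hgrow' : ∀ s t : ℝ, -r₀ ≤ s → s ≤ t → t ≤ r₀ → c₀ * (t - s) ≤ F t - F s := hgrow
  have hFbdd : ∀ s, F s ≤ 1 := by
    intro s
    have h1 : μ {ω | Y ω ≤ q + s} ≤ 1 := prob_le_one
    have := ENNReal.toReal_mono ENNReal.one_ne_top h1
    simpa using this
  have hFmeas : Measurable F := hFmono.measurable
  have hFint : ∀ t : Set ℝ, volume t ≠ ⊤ → IntegrableOn F t volume := by
    intro t ht
    exact Measure.integrableOn_of_bounded ht hFmeas.aestronglyMeasurable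
      (Filter.Eventually.of_forall (fun s => by
        rw [Real.norm_eq_abs, abs_of_nonneg ENNReal.toReal_nonneg]; exact hFbdd s))
  rcases hθ.lt_or_gt with hlt | hlt
  · -- θ < q
    set v := θ - q with hvdef
    have hv : v < 0 := by simp [hvdef]; linarith
    have hvol : ∀ ω, (volume (Set.Ici (Y ω - q) ∩ Set.Icc v 0)).toReal
        = max (0 - max (Y ω - q) v) 0 := by
      intro ω
      have hset : Set.Ici (Y ω - q) ∩ Set.Icc v 0 = Set.Icc (max (Y ω - q) v) 0 := by
        ext x
        simp only [Set.mem_inter_iff, Set.mem_Ici, Set.mem_Icc, max_le_iff]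
        tauto
      rw [hset, Real.volume_Icc, ENNReal.toReal_ofReal']
    have hpt : ∀ ω, pinball τ (Y ω - θ) - pinball τ (Y ω - q)
        = -(τ*v) - (volume (Set.Ici (Y ω - q) ∩ Set.Icc v 0)).toReal := by
      intro ω
      rw [hvol ω]
      have h1 : Y ω - θ = (Y ω - q) - v := by rw [hvdef]; ring
      rw [h1, pinball_eq, pinball_eq]
      set u := Y ω - q with hu
      rcases le_total u v with hc | hc
      · rw [max_eq_right hc, max_eq_left (show (0:ℝ) ≤ -(u - v) by linarith),
          max_eq_left (show (0:ℝ) ≤ -u by linarith),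
          max_eq_left (show (0:ℝ) ≤ 0 - v by linarith)]
        ring
      · rcases le_total u 0 with hc2 | hc2
        · rw [max_eq_left hc, max_eq_right (show -(u - v) ≤ (0:ℝ) by linarith),
            max_eq_left (show (0:ℝ) ≤ -u by linarith),
            max_eq_left (show (0:ℝ) ≤ 0 - u by linarith)]
          ring
        · rw [max_eq_left hc, max_eq_right (show -(u - v) ≤ (0:ℝ) by linarith),
            max_eq_right (show -u ≤ (0:ℝ) by linarith),
            max_eq_right (show 0 - u ≤ (0:ℝ) by linarith)]
          ring
    have hrw : (fun ω => pinball τ (Y ω - θ) - pinball τ (Y ω - q))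
        = fun ω => -(τ*v) - (volume (Set.Ici (Y ω - q) ∩ Set.Icc v 0)).toReal := funext hpt
    rw [hrw]
    have hmeas2 : Measurable (fun ω => max (0 - max (Y ω - q) v) 0) :=
      ((measurable_const.sub ((hY.sub measurable_const).max measurable_const)).max
        measurable_const)
    have hint : Integrable (fun ω => (volume (Set.Ici (Y ω - q) ∩ Set.Icc v 0)).toReal) μ := by
      simp_rw [hvol]
      refine Integrable.mono' (integrable_const (-v)) hmeas2.aestronglyMeasurable ?_
      filter_upwards with ω
      rw [Real.norm_eq_abs, abs_of_nonneg (le_max_right _ _)]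
      exact max_le (by nlinarith [le_max_right (Y ω - q) v]) (by linarith)
    rw [integral_sub (integrable_const _) hint, integral_const]
    simp only [probReal_univ, one_smul]
    rw [fubini_key μ Y hY q v 0]
    show 0 < -(τ*v) - ∫ s in Set.Icc v 0, F s
    set m := min (-v) r₀ with hm
    have hm0 : 0 < m := lt_min (by linarith) hr₀
    have hmv : v ≤ -m := by
      have : m ≤ -v := min_le_left _ _
      linarith
    have hmr : m ≤ r₀ := min_le_right _ _
    have hsplit : Set.Icc v (0:ℝ) = Set.Icc v (-m) ∪ Set.Ioc (-m) 0 :=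
      (Set.Icc_union_Ioc_eq_Icc hmv (by linarith)).symm
    rw [hsplit, setIntegral_union ((Set.Iic_disjoint_Ioc le_rfl).mono Set.Icc_subset_Iic_self le_rfl) measurableSet_Ioc
      (hFint _ (by rw [Real.volume_Icc]; exact ENNReal.ofReal_ne_top))
      (hFint _ (by rw [Real.volume_Ioc]; exact ENNReal.ofReal_ne_top))]
    have hFm : F (-m) ≤ τ - c₀*m := by
      have := hgrow' (-m) 0 (by linarith) (by linarith) hr₀.le
      rw [hF0'] at this
      linarith
    have hb1 : ∫ s in Set.Icc v (-m), F s ≤ (-m - v) * (τ - c₀*m) := by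
      have hmono : ∫ s in Set.Icc v (-m), F s ≤ ∫ _s in Set.Icc v (-m), (τ - c₀*m) := by
        refine setIntegral_mono_on (hFint _ (by rw [Real.volume_Icc]; exact ENNReal.ofReal_ne_top))
          (integrableOn_const (by rw [Real.volume_Icc]; exact ENNReal.ofReal_ne_top))
          measurableSet_Icc ?_
        intro s hs
        exact le_trans (hFmono hs.2) hFm
      rw [setIntegral_const, Real.volume_real_Icc_of_le (by linarith), smul_eq_mul] at hmono
      linarith
    have hb2 : ∫ s in Set.Ioc (-m) 0, F s ≤ τ*m - c₀*m^2/2 := by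
      have hmono : ∫ s in Set.Ioc (-m) 0, F s ≤ ∫ s in Set.Ioc (-m) 0, (τ + c₀ * s) := by
        refine setIntegral_mono_on (hFint _ (by rw [Real.volume_Ioc]; exact ENNReal.ofReal_ne_top))
          ((continuous_const.add (continuous_const.mul continuous_id)).integrableOn_Icc.mono_set
            Set.Ioc_subset_Icc_self) measurableSet_Ioc ?_
        intro s hs
        have := hgrow' s 0 (by linarith [hs.1]) hs.2 hr₀.le
        rw [hF0'] at this
        linarith
      have hcomp : ∫ s in Set.Ioc (-m) 0, (τ + c₀ * s) = τ*m - c₀*m^2/2 := by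
        rw [← intervalIntegral.integral_of_le (by linarith : -m ≤ (0:ℝ)),
          intervalIntegral.integral_add (intervalIntegrable_const (c := τ))
            (intervalIntegral.intervalIntegrable_id.const_mul c₀),
          intervalIntegral.integral_const, intervalIntegral.integral_const_mul,
          integral_id, smul_eq_mul]
        ring
      linarith
    nlinarith [mul_pos hc₀ hm0, mul_nonneg (mul_pos hc₀ hm0).le (show (0:ℝ) ≤ -v - m by linarith)]
  · -- q < θ
    set v := θ - q with hvdef
    have hv : 0 < v := by simp [hvdef]; linarith
    have hvol : ∀ ω, (volume (Set.Ici (Y ω - q) ∩ Set.Icc 0 v)).toReal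
        = max (v - max (Y ω - q) 0) 0 := by
      intro ω
      have hset : Set.Ici (Y ω - q) ∩ Set.Icc 0 v = Set.Icc (max (Y ω - q) 0) v := by
        ext x
        simp only [Set.mem_inter_iff, Set.mem_Ici, Set.mem_Icc, max_le_iff]
        tauto
      rw [hset, Real.volume_Icc, ENNReal.toReal_ofReal']
    have hpt : ∀ ω, pinball τ (Y ω - θ) - pinball τ (Y ω - q)
        = -(τ*v) + (volume (Set.Ici (Y ω - q) ∩ Set.Icc 0 v)).toReal := by
      intro ω
      rw [hvol ω]
      have h1 : Y ω - θ = (Y ω - q) - v := by rw [hvdef]; ring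
      rw [h1, pinball_eq, pinball_eq]
      set u := Y ω - q with hu
      rcases le_total u 0 with hc | hc
      · rw [max_eq_right hc, max_eq_left (show (0:ℝ) ≤ -u by linarith),
          max_eq_left (show (0:ℝ) ≤ -(u - v) by linarith),
          max_eq_left (show (0:ℝ) ≤ v - 0 by linarith)]
        ring
      · rw [max_eq_left hc, max_eq_right (show -u ≤ (0:ℝ) by linarith),
          show -(u - v) = v - u by ring]
        ring
    have hrw : (fun ω => pinball τ (Y ω - θ) - pinball τ (Y ω - q))
        = fun ω => -(τ*v) + (volume (Set.Ici (Y ω - q) ∩ Set.Icc 0 v)).toReal := funext hpt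
    rw [hrw]
    have hmeas2 : Measurable (fun ω => max (v - max (Y ω - q) 0) 0) :=
      ((measurable_const.sub ((hY.sub measurable_const).max measurable_const)).max
        measurable_const)
    have hint : Integrable (fun ω => (volume (Set.Ici (Y ω - q) ∩ Set.Icc 0 v)).toReal) μ := by
      simp_rw [hvol]
      refine Integrable.mono' (integrable_const v) hmeas2.aestronglyMeasurable ?_
      filter_upwards with ω
      rw [Real.norm_eq_abs, abs_of_nonneg (le_max_right _ _)]
      exact max_le (by nlinarith [le_max_right (Y ω - q) (0:ℝ)]) hv.le
    rw [integral_add (integrable_const _) hint, integral_const]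
    simp only [probReal_univ, one_smul]
    rw [fubini_key μ Y hY q 0 v]
    show 0 < -(τ*v) + ∫ s in Set.Icc 0 v, F s
    set m := min v r₀ with hm
    have hm0 : 0 < m := lt_min hv hr₀
    have hmv : m ≤ v := min_le_left _ _
    have hmr : m ≤ r₀ := min_le_right _ _
    have hsplit : Set.Icc (0:ℝ) v = Set.Icc 0 m ∪ Set.Ioc m v :=
      (Set.Icc_union_Ioc_eq_Icc hm0.le hmv).symm
    rw [hsplit, setIntegral_union ((Set.Iic_disjoint_Ioc le_rfl).mono Set.Icc_subset_Iic_self le_rfl) measurableSet_Ioc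
      (hFint _ (by rw [Real.volume_Icc]; exact ENNReal.ofReal_ne_top))
      (hFint _ (by rw [Real.volume_Ioc]; exact ENNReal.ofReal_ne_top))]
    have hb1 : τ*m + c₀*m^2/2 ≤ ∫ s in Set.Icc 0 m, F s := by
      have hmono : ∫ s in Set.Icc 0 m, (τ + c₀ * s) ≤ ∫ s in Set.Icc 0 m, F s := by
        refine setIntegral_mono_on ?_ (hFint _ (by rw [Real.volume_Icc]; exact ENNReal.ofReal_ne_top))
          measurableSet_Icc ?_
        · exact (continuous_const.add (continuous_const.mul continuous_id)).integrableOn_Icc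
        · intro s hs
          obtain ⟨hs0, hsm⟩ := hs
          have := hgrow' 0 s (by linarith) hs0 (by linarith)
          rw [hF0'] at this
          linarith
      have hcomp : ∫ s in Set.Icc 0 m, (τ + c₀ * s) = τ*m + c₀*m^2/2 := by
        rw [MeasureTheory.integral_Icc_eq_integral_Ioc,
          ← intervalIntegral.integral_of_le hm0.le,
          intervalIntegral.integral_add (intervalIntegrable_const (c := τ))
            (intervalIntegral.intervalIntegrable_id.const_mul c₀),
          intervalIntegral.integral_const, intervalIntegral.integral_const_mul,
          integral_id, smul_eq_mul]
        ring
      linarith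
    have hb2 : τ*(v-m) ≤ ∫ s in Set.Ioc m v, F s := by
      have hmono : ∫ s in Set.Ioc m v, (τ:ℝ) ≤ ∫ s in Set.Ioc m v, F s := by
        refine setIntegral_mono_on (integrableOn_const ?_)
          (hFint _ (by rw [Real.volume_Ioc]; exact ENNReal.ofReal_ne_top))
          measurableSet_Ioc ?_
        · rw [Real.volume_Ioc]; exact ENNReal.ofReal_ne_top
        · intro s hs
          have : F 0 ≤ F s := hFmono (le_trans hm0.le hs.1.le)
          linarith [hF0' ▸ this]
      rw [setIntegral_const, Real.volume_real_Ioc_of_le (by linarith), smul_eq_mul] at hmono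
      linarith
    have : 0 < c₀ * m^2 / 2 := by positivity
    nlinarith
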